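/- In the DGK+ comparison with server share δ_S ∈ {0,1} and s = 1 - 2·δ_S, define for ℓ-bit integers μ, η the values h_i = s·(μᵢ - ηᵢ) + 1 + Σ_{j=i+1}^{ℓ-1}(μⱼ XOR ηⱼ) for 0 ≤ i ≤ ℓ-1 and h_{-1} = δ_S + Σ_{j=0}^{ℓ-1}(μⱼ XOR ηⱼ). Let δ_C = 1 if some h_i (−1 ≤ i ≤ ℓ−1) equals 0 and δ_C = 0 otherwise. Then δ_C XOR δ_S = [μ ≤ η]. -/

import Mathlib

lemma lt_iff_bits (ℓ μ η : ℕ) (hμ : μ < 2 ^ ℓ) (hη : η < 2 ^ ℓ) :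
    μ < η ↔ ∃ i < ℓ, μ.testBit i = false ∧ η.testBit i = true ∧
      ∀ j ∈ Finset.Ico (i + 1) ℓ, μ.testBit j = η.testBit j := by
  constructor
  · intro hlt
    have hne : μ ^^^ η ≠ 0 := by
      intro h0; exact absurd (xor_eq_zero_iff.mp h0) (by omega)
    obtain ⟨i, hi1, hi2⟩ := Nat.exists_most_significant_bit hne
    have hdiff : μ.testBit i ≠ η.testBit i := by
      intro hcontra
      rw [Nat.testBit_xor, hcontra] at hi1
      simp at hi1
    have heq : ∀ j, i < j → μ.testBit j = η.testBit j := by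
      intro j hj
      have := hi2 j hj
      rw [Nat.testBit_xor] at this
      rcases Bool.eq_false_or_eq_true (μ.testBit j) with h1 | h1 <;>
        rcases Bool.eq_false_or_eq_true (η.testBit j) with h2 | h2 <;>
        simp [h1, h2] at this ⊢
    have hiℓ : i < ℓ := by
      by_contra hge
      have hle : 2 ^ ℓ ≤ 2 ^ i := Nat.pow_le_pow_right (by norm_num) (not_lt.mp hge)
      have h1 : μ.testBit i = false := Nat.testBit_lt_two_pow (lt_of_lt_of_le hμ hle)
      have h2 : η.testBit i = false := Nat.testBit_lt_two_pow (lt_of_lt_of_le hη hle)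
      exact hdiff (h1.trans h2.symm)
    have hμi : μ.testBit i = false ∧ η.testBit i = true := by
      rcases Bool.eq_false_or_eq_true (μ.testBit i) with h1 | h1 <;>
        rcases Bool.eq_false_or_eq_true (η.testBit i) with h2 | h2
      · exact absurd (h1.trans h2.symm) hdiff
      · exact absurd (Nat.lt_of_testBit i h2 h1 (fun j hj => (heq j hj).symm)) (by omega)
      · exact ⟨h1, h2⟩
      · exact absurd (h1.trans h2.symm) hdiff
    exact ⟨i, hiℓ, hμi.1, hμi.2, fun j hj => heq j (Finset.mem_Ico.mp hj).1⟩
  · rintro ⟨i, hiℓ, h1, h2, h3⟩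
    refine Nat.lt_of_testBit i h1 h2 (fun j hj => ?_)
    by_cases hjℓ : j < ℓ
    · exact h3 j (Finset.mem_Ico.mpr ⟨hj, hjℓ⟩)
    · have hle : 2 ^ ℓ ≤ 2 ^ j := Nat.pow_le_pow_right (by norm_num) (not_lt.mp hjℓ)
      rw [Nat.testBit_lt_two_pow (lt_of_lt_of_le hμ hle),
        Nat.testBit_lt_two_pow (lt_of_lt_of_le hη hle)]

theorem stmt_4 (ℓ μ η : ℕ) (hμ : μ < 2 ^ ℓ) (hη : η < 2 ^ ℓ)
    (δS : ℤ) (hδS : δS = 0 ∨ δS = 1) (s : ℤ) (hs : s = 1 - 2 * δS)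
    (h : ℕ → ℤ)
    (hh : ∀ i < ℓ, h i =
      s * ((if μ.testBit i then (1 : ℤ) else 0) - (if η.testBit i then (1 : ℤ) else 0)) + 1
        + ∑ j ∈ Finset.Ico (i + 1) ℓ, (if μ.testBit j ≠ η.testBit j then (1 : ℤ) else 0))
    (hm1 : ℤ)
    (hhm1 : hm1 = δS + ∑ j ∈ Finset.range ℓ, (if μ.testBit j ≠ η.testBit j then (1 : ℤ) else 0))
    (δC : ℤ)
    (hδC : δC = if (hm1 = 0 ∨ ∃ i < ℓ, h i = 0) then 1 else 0) :
    δC + δS - 2 * δC * δS = (if μ ≤ η then (1 : ℤ) else 0) := by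
  have sum_zero : ∀ (t : Finset ℕ),
      (∑ j ∈ t, (if μ.testBit j ≠ η.testBit j then (1 : ℤ) else 0)) = 0 ↔
      ∀ j ∈ t, μ.testBit j = η.testBit j := by
    intro t
    rw [Finset.sum_eq_zero_iff_of_nonneg (fun j _ => by positivity)]
    constructor
    · intro H j hj
      have := H j hj
      by_contra hne
      simp [hne] at this
    · intro H j hj
      simp [H j hj]
  have sum_nonneg : ∀ (t : Finset ℕ),
      (0:ℤ) ≤ ∑ j ∈ t, (if μ.testBit j ≠ η.testBit j then (1 : ℤ) else 0) :=
    fun t => Finset.sum_nonneg (fun j _ => by positivity)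
  rcases hδS with h0 | h1
  · -- δS = 0, s = 1
    subst h0
    have hs1 : s = 1 := by omega
    subst hs1
    have hcond : (hm1 = 0 ∨ ∃ i < ℓ, h i = 0) ↔ μ ≤ η := by
      constructor
      · rintro (H | ⟨i, hiℓ, Hi⟩)
        · rw [hhm1, zero_add, sum_zero] at H
          have : μ = η := Nat.eq_of_testBit_eq (fun j => by
            by_cases hjℓ : j < ℓ
            · exact H j (Finset.mem_range.mpr hjℓ)
            · have hle : 2 ^ ℓ ≤ 2 ^ j := Nat.pow_le_pow_right (by norm_num) (not_lt.mp hjℓ)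
              rw [Nat.testBit_lt_two_pow (lt_of_lt_of_le hμ hle),
                Nat.testBit_lt_two_pow (lt_of_lt_of_le hη hle)])
          exact this.le
        · rw [hh i hiℓ] at Hi
          obtain ⟨S, hSdef⟩ : ∃ S : ℤ, S = ∑ j ∈ Finset.Ico (i + 1) ℓ,
              (if μ.testBit j ≠ η.testBit j then (1 : ℤ) else 0) := ⟨_, rfl⟩
          rw [← hSdef] at Hi
          have hS : (0:ℤ) ≤ S := hSdef ▸ sum_nonneg _
          have hbits : μ.testBit i = false ∧ η.testBit i = true := by
            rcases Bool.eq_false_or_eq_true (μ.testBit i) with b1 | b1 <;>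
              rcases Bool.eq_false_or_eq_true (η.testBit i) with b2 | b2 <;>
              rw [b1, b2] at Hi <;> norm_num at Hi <;>
              first | exact ⟨b1, b2⟩ | omega
          rw [hbits.1, hbits.2] at Hi
          norm_num at Hi
          have hS0 : (∑ j ∈ Finset.Ico (i+1) ℓ,
              (if μ.testBit j ≠ η.testBit j then (1 : ℤ) else 0)) = 0 := by
            rw [← hSdef]; omega
          have := (lt_iff_bits ℓ μ η hμ hη).mpr
            ⟨i, hiℓ, hbits.1, hbits.2, (sum_zero _).mp hS0⟩
          exact this.le
      · intro hle
        rcases lt_or_eq_of_le hle with hlt | heq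
        · obtain ⟨i, hiℓ, b1, b2, h3⟩ := (lt_iff_bits ℓ μ η hμ hη).mp hlt
          refine Or.inr ⟨i, hiℓ, ?_⟩
          rw [hh i hiℓ, b1, b2, (sum_zero _).mpr h3]
          norm_num
        · subst heq
          left
          rw [hhm1, zero_add, sum_zero]
          intro j _; rfl
    by_cases hle : μ ≤ η
    · rw [hδC, if_pos (hcond.mpr hle), if_pos hle]; ring
    · rw [hδC, if_neg (fun H => hle (hcond.mp H)), if_neg hle]; ring
  · -- δS = 1, s = -1
    subst h1
    have hs1 : s = -1 := by omega
    subst hs1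
    have hcond : (hm1 = 0 ∨ ∃ i < ℓ, h i = 0) ↔ η < μ := by
      constructor
      · rintro (H | ⟨i, hiℓ, Hi⟩)
        · exfalso
          have := sum_nonneg (Finset.range ℓ)
          omega
        · rw [hh i hiℓ] at Hi
          obtain ⟨S, hSdef⟩ : ∃ S : ℤ, S = ∑ j ∈ Finset.Ico (i + 1) ℓ,
              (if μ.testBit j ≠ η.testBit j then (1 : ℤ) else 0) := ⟨_, rfl⟩
          rw [← hSdef] at Hi
          have hS : (0:ℤ) ≤ S := hSdef ▸ sum_nonneg _
          have hbits : η.testBit i = false ∧ μ.testBit i = true := by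
            rcases Bool.eq_false_or_eq_true (μ.testBit i) with b1 | b1 <;>
              rcases Bool.eq_false_or_eq_true (η.testBit i) with b2 | b2 <;>
              rw [b1, b2] at Hi <;> norm_num at Hi <;>
              first | exact ⟨b2, b1⟩ | omega
          rw [hbits.2, hbits.1] at Hi
          norm_num at Hi
          have hS0 : (∑ j ∈ Finset.Ico (i+1) ℓ,
              (if μ.testBit j ≠ η.testBit j then (1 : ℤ) else 0)) = 0 := by
            rw [← hSdef]; omega
          exact (lt_iff_bits ℓ η μ hη hμ).mpr
            ⟨i, hiℓ, hbits.1, hbits.2, fun j hj => ((sum_zero _).mp hS0 j hj).symm⟩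
      · intro hlt
        obtain ⟨i, hiℓ, b1, b2, h3⟩ := (lt_iff_bits ℓ η μ hη hμ).mp hlt
        refine Or.inr ⟨i, hiℓ, ?_⟩
        rw [hh i hiℓ, b1, b2, (sum_zero _).mpr (fun j hj => (h3 j hj).symm)]
        norm_num
    by_cases hle : μ ≤ η
    · rw [hδC, if_neg (fun H => absurd (hcond.mp H) (not_lt.mpr hle)), if_pos hle]; ring
    · rw [hδC, if_pos (hcond.mpr (not_le.mp hle)), if_neg hle]; ring
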